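/- Let F be a finite field of characteristic 2 and b, c ∈ F[x] with deg c < 2 deg b, such that t² + bt + c has no root in F(x). Let R = F[x][t]/(t² + bt + c) and let U(R) = {u + Δv : u² + buv + cv² = 1}. Then U(R) is a subgroup of the unit group R*, and R* ≅ U(R) × F* (every unit ε of R can be written uniquely as αω with α ∈ F* and ω ∈ U(R)). -/

import Mathlib

open Polynomial

section Helpers
variable {F : Type} [Field F] [CharP F 2] {b c : Polynomial F}

private lemma two_P : (2 : Polynomial F) = 0 := by
  have h2 : (2 : F) = 0 := by exact_mod_cast CharP.cast_eq_zero F 2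
  have h : (2 : Polynomial F) = C (2 : F) := (map_ofNat C 2).symm
  rw [h, h2, map_zero]

private lemma norm_mul_aux (b c u₁ v₁ u₂ v₂ : Polynomial F) :
    (u₁^2 + b*u₁*v₁ + c*v₁^2) * (u₂^2 + b*u₂*v₂ + c*v₂^2)
      = (u₁*u₂ + c*(v₁*v₂))^2 + b*(u₁*u₂ + c*(v₁*v₂))*(u₁*v₂ + u₂*v₁ + b*(v₁*v₂))
        + c*(u₁*v₂ + u₂*v₁ + b*(v₁*v₂))^2 := by
  linear_combination (-(2*c*u₁*v₁*u₂*v₂ + b*c*v₁^2*u₂*v₂ + b*c*u₁*v₁*v₂^2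
    + b^2*c*v₁^2*v₂^2)) * (two_P (F := F))

private lemma deg_lin_lt : (C b * X + C c).degree < 2 := by
  apply lt_of_le_of_lt (degree_add_le _ _)
  simp only [sup_lt_iff]
  constructor
  · apply lt_of_le_of_lt (degree_mul_le _ _)
    have h1 := degree_C_le (a := b)
    have h2 := degree_X_le (R := Polynomial F)
    calc (C b).degree + (X : Polynomial (Polynomial F)).degree ≤ 0 + 1 := add_le_add h1 h2
    _ < 2 := by norm_num
  · exact lt_of_le_of_lt degree_C_le (by norm_num)

variable {f : Polynomial (Polynomial F)} (hf : f = X ^ 2 + C b * X + C c)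
include hf

private lemma aux_monic : f.Monic := by
  rw [hf, add_assoc]
  refine (monic_X_pow 2).add_of_left ?_
  rw [degree_X_pow]
  exact_mod_cast deg_lin_lt (b := b) (c := c)

private lemma aux_deg : f.degree = 2 := by
  have h : degree ((X : Polynomial (Polynomial F)) ^ 2) = 2 := by rw [degree_X_pow]; rfl
  rw [hf, add_assoc, degree_add_eq_left_of_degree_lt (by rw [h]; exact deg_lin_lt), h]

private lemma coord_inj (u v u' v' : Polynomial F)
    (h : AdjoinRoot.of f u + AdjoinRoot.root f * AdjoinRoot.of f v
       = AdjoinRoot.of f u' + AdjoinRoot.root f * AdjoinRoot.of f v') :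
    u = u' ∧ v = v' := by
  have hm : AdjoinRoot.mk f (C u + X * C v) = AdjoinRoot.mk f (C u' + X * C v') := by
    simpa only [map_add, map_mul, AdjoinRoot.mk_C, AdjoinRoot.mk_X] using h
  rw [AdjoinRoot.mk_eq_mk] at hm
  have hdlt : ((C u + X * C v) - (C u' + X * C v')).degree < f.degree := by
    rw [aux_deg hf]
    refine lt_of_le_of_lt (degree_sub_le _ _) ?_
    simp only [sup_lt_iff]
    have key : ∀ a e : Polynomial F, (C a + X * C e).degree < 2 := by
      intro a e
      refine lt_of_le_of_lt (degree_add_le _ _) ?_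
      simp only [sup_lt_iff]
      refine ⟨lt_of_le_of_lt degree_C_le (by norm_num), ?_⟩
      refine lt_of_le_of_lt (degree_mul_le _ _) ?_
      calc (X : Polynomial (Polynomial F)).degree + (C e).degree ≤ 1 + 0 :=
            add_le_add degree_X_le degree_C_le
      _ < 2 := by norm_num
    exact ⟨key u v, key u' v'⟩
  have h0 := Polynomial.eq_zero_of_dvd_of_degree_lt hm hdlt
  rw [sub_eq_zero] at h0
  constructor
  · have := congrArg (fun p => Polynomial.coeff p 0) h0
    simpa using this
  · have := congrArg (fun p => Polynomial.coeff p 1) h0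
    simpa using this

private lemma coord_repr (ε : AdjoinRoot f) :
    ∃ u v : Polynomial F, ε = AdjoinRoot.of f u + AdjoinRoot.root f * AdjoinRoot.of f v := by
  obtain ⟨p, rfl⟩ := AdjoinRoot.mk_surjective (g := f) ε
  refine ⟨(p %ₘ f).coeff 0, (p %ₘ f).coeff 1, ?_⟩
  have hq : AdjoinRoot.mk f p = AdjoinRoot.mk f (p %ₘ f) := by
    rw [AdjoinRoot.mk_eq_mk]
    exact ⟨p /ₘ f, by rw [modByMonic_eq_sub_mul_div _ f]; ring⟩
  have hd1 : (p %ₘ f).degree ≤ 1 := by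
    have hlt := degree_modByMonic_lt p (aux_monic hf)
    rw [aux_deg hf] at hlt
    cases hd : (p %ₘ f).degree with
    | bot => exact bot_le
    | coe n =>
      rw [hd] at hlt
      exact WithBot.coe_le_coe.mpr (Nat.lt_succ_iff.mp (WithBot.coe_lt_coe.mp hlt))
  have hrepr := eq_X_add_C_of_degree_le_one hd1
  rw [hq]
  conv_lhs => rw [hrepr]
  simp only [map_add, map_mul, AdjoinRoot.mk_C, AdjoinRoot.mk_X]
  ring

private lemma root_sq :
    (AdjoinRoot.root f) ^ 2 + AdjoinRoot.of f b * AdjoinRoot.root f + AdjoinRoot.of f c = 0 := by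
  have h := AdjoinRoot.eval₂_root f
  rw [hf] at h ⊢
  simpa only [eval₂_add, eval₂_mul, eval₂_pow, eval₂_X, eval₂_C] using h

private lemma two_R : (2 : AdjoinRoot f) = 0 := by
  have h : (2 : AdjoinRoot f) = AdjoinRoot.of f (2 : Polynomial F) := (map_ofNat _ 2).symm
  rw [h, two_P, map_zero]

private lemma mul_formula (u₁ v₁ u₂ v₂ : Polynomial F) :
    (AdjoinRoot.of f u₁ + AdjoinRoot.root f * AdjoinRoot.of f v₁)
      * (AdjoinRoot.of f u₂ + AdjoinRoot.root f * AdjoinRoot.of f v₂)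
    = AdjoinRoot.of f (u₁*u₂ + c*(v₁*v₂))
      + AdjoinRoot.root f * AdjoinRoot.of f (u₁*v₂ + u₂*v₁ + b*(v₁*v₂)) := by
  have hr := root_sq hf
  have h2 := two_R hf
  simp only [map_add, map_mul]
  linear_combination (AdjoinRoot.of f v₁ * AdjoinRoot.of f v₂) * hr
    - (AdjoinRoot.of f b * AdjoinRoot.root f + AdjoinRoot.of f c)
      * (AdjoinRoot.of f v₁ * AdjoinRoot.of f v₂) * h2

end Helpers

/-- F finite of characteristic 2, deg c < 2 deg b, t² + bt + c without root in
F(x): the norm-one elements U(R) = {u + Δv : u² + buv + cv² = 1} of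
R = F[x][t]/(t² + bt + c) form a subgroup of the units, and every unit of R is
uniquely a product αω with α ∈ F* and ω ∈ U(R) (so R* ≅ U(R) × F*). -/
theorem units_decompose_as_normone_times_constants
    (F : Type) [Field F] [Fintype F] [CharP F 2] (b c : Polynomial F)
    (hc : c ≠ 0) (hdeg : c.natDegree < 2 * b.natDegree)
    (hnoroot : ∀ ρ : RatFunc F,
      ρ ^ 2 + algebraMap (Polynomial F) (RatFunc F) b * ρ
        + algebraMap (Polynomial F) (RatFunc F) c ≠ 0) :
    ∀ (f : Polynomial (Polynomial F)), f = X ^ 2 + C b * X + C c →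
    ∀ (S : Set (AdjoinRoot f)),
      S = {ω | ∃ u v : Polynomial F,
        ω = AdjoinRoot.of f u + AdjoinRoot.root f * AdjoinRoot.of f v ∧
        u ^ 2 + b * u * v + c * v ^ 2 = 1} →
    -- U(R) is a subgroup of R*
    ((1 : AdjoinRoot f) ∈ S ∧
     (∀ ω₁ ω₂, ω₁ ∈ S → ω₂ ∈ S → ω₁ * ω₂ ∈ S) ∧
     (∀ ω, ω ∈ S → ∃ ω', ω' ∈ S ∧ ω * ω' = 1)) ∧
    -- R* = U(R) × F*
    (∀ ε : AdjoinRoot f, IsUnit ε →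
      ∃! p : F × AdjoinRoot f,
        p.1 ≠ 0 ∧ p.2 ∈ S ∧ ε = algebraMap F (AdjoinRoot f) p.1 * p.2) := by
  intro f hf S hS
  subst hS
  have h2F : (2 : F) = 0 := by exact_mod_cast CharP.cast_eq_zero F 2
  constructor
  · refine ⟨⟨1, 0, by simp, by ring⟩, ?_, ?_⟩
    · rintro ω₁ ω₂ ⟨u₁, v₁, rfl, hN₁⟩ ⟨u₂, v₂, rfl, hN₂⟩
      refine ⟨u₁*u₂ + c*(v₁*v₂), u₁*v₂ + u₂*v₁ + b*(v₁*v₂), mul_formula hf u₁ v₁ u₂ v₂, ?_⟩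
      have hmm := norm_mul_aux b c u₁ v₁ u₂ v₂
      calc (u₁*u₂ + c*(v₁*v₂)) ^ 2 + b * (u₁*u₂ + c*(v₁*v₂)) * (u₁*v₂ + u₂*v₁ + b*(v₁*v₂))
            + c * (u₁*v₂ + u₂*v₁ + b*(v₁*v₂)) ^ 2
          = (u₁^2 + b*u₁*v₁ + c*v₁^2) * (u₂^2 + b*u₂*v₂ + c*v₂^2) :=
            (norm_mul_aux b c u₁ v₁ u₂ v₂).symm
        _ = 1 := by rw [hN₁, hN₂, one_mul]
    · rintro ω ⟨u, v, rfl, hN⟩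
      refine ⟨AdjoinRoot.of f (u + b*v) + AdjoinRoot.root f * AdjoinRoot.of f v,
        ⟨u + b*v, v, rfl, by linear_combination hN + (b*u*v + b^2*v^2) * (two_P (F := F))⟩, ?_⟩
      rw [mul_formula hf]
      have hU : u*(u + b*v) + c*(v*v) = 1 := by linear_combination hN
      have hV : u*v + (u + b*v)*v + b*(v*v) = 0 := by
        linear_combination (u*v + b*v^2) * (two_P (F := F))
      rw [hU, hV]
      simp
  · intro ε hε
    obtain ⟨ε', hεε'⟩ := hε.exists_right_inv
    obtain ⟨u, v, hε_eq⟩ := coord_repr hf ε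
    obtain ⟨u', v', hε'_eq⟩ := coord_repr hf ε'
    have hprod : AdjoinRoot.of f (u*u' + c*(v*v'))
        + AdjoinRoot.root f * AdjoinRoot.of f (u*v' + u'*v + b*(v*v'))
        = AdjoinRoot.of f 1 + AdjoinRoot.root f * AdjoinRoot.of f 0 := by
      rw [← mul_formula hf, ← hε_eq, ← hε'_eq, hεε']
      simp
    obtain ⟨hA, hB⟩ := coord_inj hf _ _ _ _ hprod
    have hNunit : (u^2 + b*u*v + c*v^2) * (u'^2 + b*u'*v' + c*v'^2) = 1 := by
      rw [norm_mul_aux, hA, hB]; ring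
    obtain ⟨α', hα'unit, hα'⟩ := Polynomial.isUnit_iff.mp (IsUnit.of_mul_eq_one _ hNunit)
    have hα'ne : α' ≠ 0 := hα'unit.ne_zero
    obtain ⟨r, hr⟩ := FiniteField.isSquare_of_char_two (F := F) (ringChar.eq_iff.mpr ‹_›) α'
    have hα : r ^ 2 = α' := by rw [hr]; ring
    have hαne : r ≠ 0 := by
      intro h; apply hα'ne; rw [← hα, h]; ring
    have hCC : C r * (C r⁻¹) = (1 : Polynomial F) := by
      rw [← C_mul, mul_inv_cancel₀ hαne, C_1]
    refine ⟨(r, AdjoinRoot.of f (C r⁻¹ * u) + AdjoinRoot.root f * AdjoinRoot.of f (C r⁻¹ * v)),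
      ⟨hαne, ⟨C r⁻¹ * u, C r⁻¹ * v, rfl, ?_⟩, ?_⟩, ?_⟩
    · -- norm one
      have he : (C r⁻¹ * u)^2 + b*(C r⁻¹ * u)*(C r⁻¹ * v) + c*(C r⁻¹ * v)^2
          = (C r⁻¹)^2 * (u^2 + b*u*v + c*v^2) := by ring
      rw [he, ← hα', ← C_pow, ← C_mul, ← hα]
      rw [show (r⁻¹)^2 * r^2 = (r⁻¹ * r)^2 by ring, inv_mul_cancel₀ hαne]
      norm_num
    · -- decomposition
      have hu : C r * (C r⁻¹ * u) = u := by rw [← mul_assoc, hCC, one_mul]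
      have hv : C r * (C r⁻¹ * v) = v := by rw [← mul_assoc, hCC, one_mul]
      have halg : algebraMap F (AdjoinRoot f) r = AdjoinRoot.of f (C r) := rfl
      rw [hε_eq, halg]
      rw [mul_add, ← map_mul, hu]
      rw [show AdjoinRoot.of f (C r) * (AdjoinRoot.root f * AdjoinRoot.of f (C r⁻¹ * v))
          = AdjoinRoot.root f * (AdjoinRoot.of f (C r) * AdjoinRoot.of f (C r⁻¹ * v)) by ring,
        ← map_mul, hv]
    · -- uniqueness
      rintro ⟨β, ψ⟩ ⟨hβ, ⟨u₂, v₂, rfl, hN₂⟩, hdec⟩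
      have halgβ : algebraMap F (AdjoinRoot f) β = AdjoinRoot.of f (C β) := rfl
      have hcoords : AdjoinRoot.of f u + AdjoinRoot.root f * AdjoinRoot.of f v
          = AdjoinRoot.of f (C β * u₂) + AdjoinRoot.root f * AdjoinRoot.of f (C β * v₂) := by
        rw [← hε_eq, hdec, halgβ]
        simp only [map_mul]
        ring
      obtain ⟨h1, h2⟩ := coord_inj hf _ _ _ _ hcoords
      have hNval : C α' = C (β ^ 2) := by
        rw [hα', h1, h2]
        calc (C β * u₂)^2 + b*(C β * u₂)*(C β * v₂) + c*(C β * v₂)^2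
            = C β ^ 2 * (u₂^2 + b*u₂*v₂ + c*v₂^2) := by ring
          _ = C β ^ 2 := by rw [hN₂, mul_one]
          _ = C (β ^ 2) := (C_pow).symm
      have hsq : r ^ 2 = β ^ 2 := by rw [hα]; exact C_injective hNval
      have hrβ : r = β := by
        have hz : (r - β) ^ 2 = 0 := by linear_combination hsq + (β^2 - r*β) * h2F
        have := pow_eq_zero_iff (n := 2) (by norm_num) |>.mp hz
        exact sub_eq_zero.mp this
      subst hrβ
      have hu2 : C r⁻¹ * u = u₂ := by rw [h1, ← mul_assoc, ← C_mul, inv_mul_cancel₀ hαne, C_1, one_mul]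
      have hv2 : C r⁻¹ * v = v₂ := by rw [h2, ← mul_assoc, ← C_mul, inv_mul_cancel₀ hαne, C_1, one_mul]
      rw [hu2, hv2]
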